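/- arXiv:1407.5555 — 4 statements merged into one kernel-verified Lean document; each statement's English description precedes it below -/
import Mathlib

section
/- The point p_0* = (r_0*, 0, …, 0) ∈ ℝ^{N+1} is always a stationary solution of the aggregated system S_0^c. If f̃_i(r_0*) ≠ m̃_i for every i = 1,…,N (i.e. r_0* ≠ r_i* for all i ≥ 1), then p_0* is hyperbolic. If moreover f̃_i(r_0*) < m̃_i for every i = 1,…,N (i.e. r_0* < r_i* for all i ≥ 1), then p_0* is the only nonnegative stationary solution of S_0^c and it is linearly asymptotically stable. -/
open Filter Topology

namespace Aggregated

/-- Right-hand side of the aggregated chemostat system `S₀ᶜ` on `ℝ^{N+1}`: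
coordinate `0` is the resource `r`, coordinate `i.succ` is species `i`. -/
noncomputable def rhs (N : ℕ) (Itld : ℝ) (mtld : Fin (N + 1) → ℝ)
    (ftld : Fin N → ℝ → ℝ) (p : Fin (N + 1) → ℝ) : Fin (N + 1) → ℝ :=
  fun k =>
    Fin.cases (motive := fun _ => ℝ)
      (Itld - mtld 0 * p 0 - ∑ i : Fin N, ftld i (p 0) * p i.succ)
      (fun i => (ftld i (p 0) - mtld i.succ) * p i.succ)
      k

/-- A solution of `S₀ᶜ` on `[0, ∞)` (values for `t < 0` are irrelevant). -/
def IsSolution (N : ℕ) (Itld : ℝ) (mtld : Fin (N + 1) → ℝ)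
    (ftld : Fin N → ℝ → ℝ) (p : ℝ → Fin (N + 1) → ℝ) : Prop :=
  ∀ t : ℝ, 0 ≤ t → HasDerivAt p (rhs N Itld mtld ftld (p t)) t

/-- Jacobian matrix of the right-hand side of `S₀ᶜ` at a point `p`. -/
noncomputable def jacMatrix (N : ℕ) (Itld : ℝ) (mtld : Fin (N + 1) → ℝ)
    (ftld : Fin N → ℝ → ℝ) (p : Fin (N + 1) → ℝ) :
    Matrix (Fin (N + 1)) (Fin (N + 1)) ℝ :=
  Matrix.of fun a b => fderiv ℝ (rhs N Itld mtld ftld) p (Pi.single b 1) a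

/-- Hyperbolicity: `0` is not a complex eigenvalue of the Jacobian. -/
noncomputable def IsHyperbolic (N : ℕ) (Itld : ℝ) (mtld : Fin (N + 1) → ℝ)
    (ftld : Fin N → ℝ → ℝ) (p : Fin (N + 1) → ℝ) : Prop :=
  (0 : ℂ) ∉ spectrum ℂ ((jacMatrix N Itld mtld ftld p).map (fun r : ℝ => (r : ℂ)))

/-- Linear asymptotic stability: all complex eigenvalues of the Jacobian have
negative real part. -/
noncomputable def IsLinStable (N : ℕ) (Itld : ℝ) (mtld : Fin (N + 1) → ℝ)
    (ftld : Fin N → ℝ → ℝ) (p : Fin (N + 1) → ℝ) : Prop :=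
  ∀ z ∈ spectrum ℂ ((jacMatrix N Itld mtld ftld p).map (fun r : ℝ => (r : ℂ))),
    z.re < 0

/-- Linear instability: some complex eigenvalue of the Jacobian has positive
real part. -/
noncomputable def IsLinUnstable (N : ℕ) (Itld : ℝ) (mtld : Fin (N + 1) → ℝ)
    (ftld : Fin N → ℝ → ℝ) (p : Fin (N + 1) → ℝ) : Prop :=
  ∃ z ∈ spectrum ℂ ((jacMatrix N Itld mtld ftld p).map (fun r : ℝ => (r : ℂ))),
    0 < z.re

/-- The species-free equilibrium `p₀* = (r₀*, 0, …, 0)` with `r₀* = Ĩ/m̃₀`. -/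
noncomputable def p0star (N : ℕ) (Itld : ℝ) (mtld : Fin (N + 1) → ℝ) :
    Fin (N + 1) → ℝ :=
  fun k => Fin.cases (motive := fun _ => ℝ) (Itld / mtld 0) (fun _ => 0) k

/-- The single-species equilibrium `pᵢ* = (rᵢ*, 0, …, 0, uᵢ*, 0, …, 0)` with
`uᵢ* = (m̃₀/m̃ᵢ)(r₀* − rᵢ*)`. -/
noncomputable def pistar (N : ℕ) (Itld : ℝ) (mtld : Fin (N + 1) → ℝ)
    (i : Fin N) (ri : ℝ) : Fin (N + 1) → ℝ :=
  fun k =>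
    if k = 0 then ri
    else if k = i.succ then mtld 0 / mtld i.succ * (Itld / mtld 0 - ri)
    else 0

lemma spectrum_triangular {n : ℕ} (M : Matrix (Fin n) (Fin n) ℂ)
    (h : ∀ a b : Fin n, b < a → M a b = 0) (z : ℂ) :
    z ∈ spectrum ℂ M ↔ ∃ k, M k k = z := by
  have hdet : (algebraMap ℂ (Matrix (Fin n) (Fin n) ℂ) z - M).det
      = ∏ k, (z - M k k) := by
    rw [Matrix.det_of_upperTriangular]
    · exact Finset.prod_congr rfl fun k _ => by
        simp [Matrix.algebraMap_matrix_apply]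
    · intro a b hab
      simp [Matrix.sub_apply, Matrix.algebraMap_matrix_apply,
        (ne_of_gt hab : a ≠ b), h a b hab]
  rw [spectrum.mem_iff, Matrix.isUnit_iff_isUnit_det, isUnit_iff_ne_zero, not_ne_iff,
    hdet, Finset.prod_eq_zero_iff]
  simp [sub_eq_zero, eq_comm]

/-- `p₀* = (r₀*, 0, …, 0)` is always a stationary solution of the
aggregated system `S₀ᶜ`; it is hyperbolic when `f̃ᵢ(r₀*) ≠ m̃ᵢ` for all `i`, and if
`f̃ᵢ(r₀*) < m̃ᵢ` for all `i` then it is the unique nonnegative stationary solution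
and it is linearly asymptotically stable. -/
theorem statement7 (N : ℕ) (hN : 1 ≤ N)
    (Itld : ℝ) (hI : 0 < Itld)
    (mtld : Fin (N + 1) → ℝ) (hm : ∀ k, 0 < mtld k)
    (ftld : Fin N → ℝ → ℝ)
    (hf_smooth : ∀ i, ContDiffOn ℝ 1 (ftld i) (Set.Ici 0))
    (hf_mono : ∀ i, StrictMonoOn (ftld i) (Set.Ici 0))
    (hf_zero : ∀ i, ftld i 0 = 0)
    (hf_nonneg : ∀ i r, 0 ≤ r → 0 ≤ ftld i r) :
    rhs N Itld mtld ftld (p0star N Itld mtld) = 0 ∧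
    ((∀ i : Fin N, ftld i (Itld / mtld 0) ≠ mtld i.succ) →
      IsHyperbolic N Itld mtld ftld (p0star N Itld mtld)) ∧
    ((∀ i : Fin N, ftld i (Itld / mtld 0) < mtld i.succ) →
      (∀ p : Fin (N + 1) → ℝ, (∀ k, 0 ≤ p k) →
        rhs N Itld mtld ftld p = 0 → p = p0star N Itld mtld) ∧
      IsLinStable N Itld mtld ftld (p0star N Itld mtld)) := by
  set r : ℝ := Itld / mtld 0 with hrdef
  have hr : 0 < r := div_pos hI (hm 0)
  have hmr : mtld 0 * r = Itld := by
    rw [hrdef, mul_div_cancel₀ _ (hm 0).ne']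
  set p0 : Fin (N+1) → ℝ := p0star N Itld mtld with hp0def
  have hp00 : p0 0 = r := rfl
  have hp0s : ∀ i : Fin N, p0 i.succ = 0 := fun i => by
    simp [hp0def, p0star]
  have hfd : ∀ i, HasDerivAt (ftld i) (deriv (ftld i) r) r := fun i =>
    (((hf_smooth i).contDiffAt (Ici_mem_nhds hr)).differentiableAt one_ne_zero).hasDerivAt
  -- the derivative rows
  set Lr : (Fin (N+1) → ℝ) →L[ℝ] ℝ :=
    (0 : (Fin (N+1) → ℝ) →L[ℝ] ℝ) - mtld 0 • ContinuousLinearMap.proj 0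
      - ∑ i : Fin N, ftld i r • ContinuousLinearMap.proj i.succ with hLr
  set φ' : ∀ _ : Fin (N+1), (Fin (N+1) → ℝ) →L[ℝ] ℝ :=
    fun k => Fin.cases (motive := fun _ => (Fin (N+1) → ℝ) →L[ℝ] ℝ) Lr
      (fun i => (ftld i r - mtld i.succ) • ContinuousLinearMap.proj i.succ) k with hφ'
  have hg : ∀ i : Fin N, HasFDerivAt (fun p : Fin (N+1) → ℝ => ftld i (p 0))
      (deriv (ftld i) r • ContinuousLinearMap.proj (0 : Fin (N+1))) p0 := fun i =>
    by
      have h := HasDerivAt.comp_hasFDerivAt_of_eq p0 (hfd i)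
        (hasFDerivAt_apply (𝕜 := ℝ) (0 : Fin (N+1)) p0) hp00.symm
      exact h
  have hh : ∀ j : Fin (N+1), HasFDerivAt (𝕜 := ℝ) (fun p : Fin (N+1) → ℝ => p j)
      (ContinuousLinearMap.proj j) p0 := fun j => by exact hasFDerivAt_apply j p0
  have hterm : ∀ i : Fin N,
      HasFDerivAt (𝕜 := ℝ) (fun p : Fin (N+1) → ℝ => ftld i (p 0) * p i.succ)
      (ftld i r • ContinuousLinearMap.proj i.succ) p0 := by
    intro i
    have := (hg i).mul (hh i.succ)
    simp [hp00, hp0s i] at this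
    exact this
  have hF : HasFDerivAt (rhs N Itld mtld ftld) (ContinuousLinearMap.pi φ') p0 := by
    rw [show rhs N Itld mtld ftld = fun p k =>
      (fun k p => rhs N Itld mtld ftld p k) k p from rfl]
    refine hasFDerivAt_pi.2 fun k => ?_
    induction k using Fin.cases with
    | zero =>
      simp only [rhs, Fin.cases_zero, hφ']
      exact ((hasFDerivAt_const Itld p0).sub
        ((hh 0).const_mul (mtld 0))).sub (HasFDerivAt.fun_sum fun i _ => hterm i)
    | succ i =>
      simp only [rhs, Fin.cases_succ, hφ']
      have := ((hg i).sub_const (mtld i.succ)).mul (hh i.succ)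
      simp [hp00, hp0s i] at this
      exact this
  have hfder : fderiv ℝ (rhs N Itld mtld ftld) p0 = ContinuousLinearMap.pi φ' :=
    hF.fderiv
  have hJ : ∀ a b, jacMatrix N Itld mtld ftld p0 a b = φ' a (Pi.single b 1) := by
    intro a b
    simp [jacMatrix, hfder]
  -- diagonal values
  set dg : Fin (N+1) → ℝ := fun k =>
    Fin.cases (motive := fun _ => ℝ) (-(mtld 0)) (fun i => ftld i r - mtld i.succ) k
    with hdg
  have hdiag : ∀ k, jacMatrix N Itld mtld ftld p0 k k = dg k := by
    intro k
    rw [hJ]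
    induction k using Fin.cases with
    | zero =>
      simp only [hφ', hdg, Fin.cases_zero, hLr]
      simp [Fin.succ_ne_zero, Pi.single_eq_of_ne]
    | succ i =>
      simp [hφ', hdg]
  have htri : ∀ a b : Fin (N+1), b < a → jacMatrix N Itld mtld ftld p0 a b = 0 := by
    intro a b hab
    rw [hJ]
    induction a using Fin.cases with
    | zero => exact absurd hab (Fin.not_lt_zero b)
    | succ j =>
      have hne : j.succ ≠ b := (ne_of_gt hab)
      simp [hφ', Pi.single_eq_of_ne hne]
  have hspec : ∀ z : ℂ,
      z ∈ spectrum ℂ ((jacMatrix N Itld mtld ftld p0).map (fun r : ℝ => (r : ℂ)))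
        ↔ ∃ k, ((dg k : ℝ) : ℂ) = z := by
    intro z
    rw [spectrum_triangular _ (fun a b hab => by
      simp [Matrix.map_apply, htri a b hab])]
    simp [Matrix.map_apply, hdiag]
  -- stationarity
  have hstat : rhs N Itld mtld ftld p0 = 0 := by
    funext k
    induction k using Fin.cases with
    | zero => simp [rhs, hp00, hp0s, hmr]
    | succ i => simp [rhs, hp0s i]
  refine ⟨hstat, ?_, ?_⟩
  · -- hyperbolic
    intro hne
    intro h0
    rw [hspec] at h0
    obtain ⟨k, hk⟩ := h0
    induction k using Fin.cases with
    | zero =>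
      simp only [hdg, Fin.cases_zero, Complex.ofReal_eq_zero, neg_eq_zero] at hk
      exact (hm 0).ne' hk
    | succ i =>
      simp only [hdg, Fin.cases_succ, Complex.ofReal_eq_zero, sub_eq_zero] at hk
      exact hne i hk
  · intro hlt
    constructor
    · -- uniqueness
      intro p hpn hps
      have hcomp : ∀ k, rhs N Itld mtld ftld p k = 0 := fun k => congrFun hps k
      have h0 : Itld - mtld 0 * p 0 - ∑ i : Fin N, ftld i (p 0) * p i.succ = 0 := by
        simpa [rhs] using hcomp 0
      have hsucc : ∀ i : Fin N, (ftld i (p 0) - mtld i.succ) * p i.succ = 0 :=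
        fun i => by simpa [rhs] using hcomp i.succ
      have hzero : ∀ i : Fin N, p i.succ = 0 := by
        intro i
        by_contra hne0
        have hfe : ftld i (p 0) = mtld i.succ := by
          have := mul_eq_zero.1 (hsucc i)
          rcases this with h | h
          · exact sub_eq_zero.1 h
          · exact absurd h hne0
        have hgt : r < p 0 := by
          by_contra hle
          push_neg at hle
          have := (hf_mono i).monotoneOn (hpn 0) (le_of_lt hr) hle
          rw [hfe] at this
          exact absurd (lt_of_le_of_lt this (hlt i)) (lt_irrefl _)
        have hsum : 0 ≤ ∑ i : Fin N, ftld i (p 0) * p i.succ :=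
          Finset.sum_nonneg fun j _ =>
            mul_nonneg (hf_nonneg j _ (hpn 0)) (hpn j.succ)
        have hneg : Itld - mtld 0 * p 0 < 0 := by
          have : mtld 0 * r < mtld 0 * p 0 :=
            (mul_lt_mul_iff_right₀ (hm 0)).2 hgt
          linarith [hmr]
        linarith
      have hp0eq : p 0 = r := by
        have hsum0 : ∑ i : Fin N, ftld i (p 0) * p i.succ = 0 :=
          Finset.sum_eq_zero fun j _ => by rw [hzero j, mul_zero]
        rw [hsum0] at h0
        have : mtld 0 * p 0 = Itld := by linarith
        rw [hrdef, eq_div_iff (hm 0).ne']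
        linarith
      funext k
      induction k using Fin.cases with
      | zero => rw [hp0eq]; exact hp00.symm
      | succ i => rw [hzero i, (hp0s i).symm]
    · -- stability
      intro z hz
      rw [hspec] at hz
      obtain ⟨k, hk⟩ := hz
      rw [← hk, Complex.ofReal_re]
      induction k using Fin.cases with
      | zero => simpa [hdg] using hm 0
      | succ i => simpa [hdg, sub_neg] using hlt i


end Aggregated
end

section
/- Both the averaged map F₀ : ℝ^d × C(Ω, ℝ^d) → ℝ^d defined by F₀(X, Y) = (1/μ(Ω)) ∫_Ω f(x, X + Y(x)) dμ(x), and the Nemytskii map 𝒩 : ℝ^d × C(Ω, ℝ^d) → C(Ω, ℝ^d) defined by 𝒩(X, Y)(x) = f(x, X + Y(x)), are continuously Fréchet differentiable (C¹). -/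
open MeasureTheory

section Aux

variable {Ω : Type*} [MetricSpace Ω] [CompactSpace Ω] {d : ℕ}

/-- The canonical Nemytskii map. -/
noncomputable def nemAux (f : Ω → (Fin d → ℝ) → (Fin d → ℝ))
    (hf : Continuous fun q : Ω × (Fin d → ℝ) => f q.1 q.2)
    (p : (Fin d → ℝ) × C(Ω, Fin d → ℝ)) : C(Ω, Fin d → ℝ) :=
  ⟨fun x => f x (p.1 + p.2 x),
    hf.comp (continuous_id.prodMk (continuous_const.add p.2.continuous))⟩

/-- The candidate derivative of the Nemytskii map at `p`. -/
noncomputable def dnemAux (Df : Ω → (Fin d → ℝ) → ((Fin d → ℝ) →L[ℝ] (Fin d → ℝ)))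
    (hDf_cont : Continuous fun q : Ω × (Fin d → ℝ) => Df q.1 q.2)
    (p : (Fin d → ℝ) × C(Ω, Fin d → ℝ)) :
    ((Fin d → ℝ) × C(Ω, Fin d → ℝ)) →L[ℝ] C(Ω, Fin d → ℝ) := by
  refine LinearMap.mkContinuous
    { toFun := fun q => ⟨fun x => Df x (p.1 + p.2 x) (q.1 + q.2 x),
        (hDf_cont.comp (continuous_id.prodMk
          (continuous_const.add p.2.continuous))).clm_apply
          (continuous_const.add q.2.continuous)⟩
      map_add' := ?_
      map_smul' := ?_ }
    (2 * ‖(⟨fun x => ‖Df x (p.1 + p.2 x)‖,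
        ((hDf_cont.comp (continuous_id.prodMk
          (continuous_const.add p.2.continuous)))).norm⟩ : C(Ω, ℝ))‖) ?_
  · intro q r
    ext x
    simp only [ContinuousMap.coe_mk, Prod.fst_add, Prod.snd_add, ContinuousMap.add_apply]
    rw [show q.1 + r.1 + (q.2 x + r.2 x) = (q.1 + q.2 x) + (r.1 + r.2 x) by abel, map_add]
  · intro c q
    refine ContinuousMap.ext fun x => ?_
    simp only [ContinuousMap.coe_mk, Prod.smul_fst, Prod.smul_snd, ContinuousMap.smul_apply,
      RingHom.id_apply]
    rw [← smul_add, _root_.map_smul]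
  · intro q
    set G : C(Ω, ℝ) := ⟨fun x => ‖Df x (p.1 + p.2 x)‖,
        ((hDf_cont.comp (continuous_id.prodMk
          (continuous_const.add p.2.continuous)))).norm⟩
    refine (ContinuousMap.norm_le _ (by positivity)).2 fun x => ?_
    have h1 : ‖Df x (p.1 + p.2 x)‖ ≤ ‖G‖ := by
      simpa [G, ContinuousMap.coe_mk, norm_norm] using G.norm_coe_le_norm x
    have h2 : ‖q.1 + q.2 x‖ ≤ 2 * ‖q‖ := by
      have := norm_fst_le q
      have h3 := (q.2.norm_coe_le_norm x).trans (norm_snd_le q)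
      calc ‖q.1 + q.2 x‖ ≤ ‖q.1‖ + ‖q.2 x‖ := norm_add_le _ _
        _ ≤ 2 * ‖q‖ := by linarith
    calc ‖Df x (p.1 + p.2 x) (q.1 + q.2 x)‖
        ≤ ‖Df x (p.1 + p.2 x)‖ * ‖q.1 + q.2 x‖ := ContinuousLinearMap.le_opNorm _ _
      _ ≤ ‖G‖ * (2 * ‖q‖) := by
          exact mul_le_mul h1 h2 (norm_nonneg _) (norm_nonneg _)
      _ = 2 * ‖G‖ * ‖q‖ := by ring

lemma nemAux_hasFDerivAt (f : Ω → (Fin d → ℝ) → (Fin d → ℝ))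
    (hf : Continuous fun q : Ω × (Fin d → ℝ) => f q.1 q.2)
    (Df : Ω → (Fin d → ℝ) → ((Fin d → ℝ) →L[ℝ] (Fin d → ℝ)))
    (hDf : ∀ (x : Ω) (w : Fin d → ℝ), HasFDerivAt (f x) (Df x w) w)
    (hDf_cont : Continuous fun q : Ω × (Fin d → ℝ) => Df q.1 q.2)
    (hDf_lip : ∀ r : ℝ, 0 < r → ∃ L : ℝ, 0 ≤ L ∧ ∀ (x : Ω) (w w' : Fin d → ℝ),
      ‖w‖ ≤ r → ‖w'‖ ≤ r → ‖Df x w - Df x w'‖ ≤ L * ‖w - w'‖)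
    (p : (Fin d → ℝ) × C(Ω, Fin d → ℝ)) :
    HasFDerivAt (nemAux f hf) (dnemAux Df hDf_cont p) p := by
  rw [hasFDerivAt_iff_isLittleO_nhds_zero, Asymptotics.isLittleO_iff]
  intro c hc
  obtain ⟨L, hL0, hL⟩ := hDf_lip (‖p.1‖ + ‖p.2‖ + 1) (by positivity)
  have hδ : (0:ℝ) < min (1/2) (c / (4 * L + 1)) := by
    apply lt_min (by norm_num); positivity
  filter_upwards [Metric.ball_mem_nhds (0 : (Fin d → ℝ) × C(Ω, Fin d → ℝ)) hδ] with q hq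
  rw [Metric.mem_ball, dist_zero_right] at hq
  have hq1 : ‖q‖ ≤ 1/2 := (hq.trans_le (min_le_left _ _)).le
  have hq2 : ‖q‖ ≤ c / (4 * L + 1) := (hq.trans_le (min_le_right _ _)).le
  refine (ContinuousMap.norm_le _ (by positivity)).2 fun x => ?_
  set w : Fin d → ℝ := p.1 + p.2 x with hw
  set v : Fin d → ℝ := q.1 + q.2 x with hv
  have hvq : ‖v‖ ≤ 2 * ‖q‖ := by
    have := norm_fst_le q
    have h3 := (q.2.norm_coe_le_norm x).trans (norm_snd_le q)
    calc ‖v‖ ≤ ‖q.1‖ + ‖q.2 x‖ := norm_add_le _ _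
      _ ≤ 2 * ‖q‖ := by linarith
  have hv1 : ‖v‖ ≤ 1 := by linarith
  have hwr : ‖w‖ ≤ ‖p.1‖ + ‖p.2‖ := by
    have := (p.2.norm_coe_le_norm x)
    calc ‖w‖ ≤ ‖p.1‖ + ‖p.2 x‖ := norm_add_le _ _
      _ ≤ ‖p.1‖ + ‖p.2‖ := by linarith
  have key : ‖f x (w + v) - f x w - Df x w v‖ ≤ (L * ‖v‖) * ‖v‖ := by
    have hball : ∀ z ∈ Metric.closedBall w ‖v‖, ‖Df x z - Df x w‖ ≤ L * ‖v‖ := by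
      intro z hz
      rw [Metric.mem_closedBall, dist_eq_norm] at hz
      have hz2 : ‖z‖ ≤ ‖p.1‖ + ‖p.2‖ + 1 := by
        calc ‖z‖ = ‖w + (z - w)‖ := by rw [show w + (z - w) = z from by abel]
          _ ≤ ‖w‖ + ‖z - w‖ := norm_add_le _ _
          _ ≤ ‖p.1‖ + ‖p.2‖ + 1 := by linarith
      calc ‖Df x z - Df x w‖ ≤ L * ‖z - w‖ := hL x z w hz2 (by linarith)
        _ ≤ L * ‖v‖ := by exact mul_le_mul_of_nonneg_left hz hL0
    have := (convex_closedBall w ‖v‖).norm_image_sub_le_of_norm_hasFDerivWithin_le'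
      (f' := fun z => Df x z) (φ := Df x w) (C := L * ‖v‖) (x := w) (y := w + v)
      (fun z _ => (hDf x z).hasFDerivWithinAt) hball
      (Metric.mem_closedBall_self (norm_nonneg _))
      (by simp [Metric.mem_closedBall, dist_eq_norm])
    simpa [add_sub_cancel_left] using this
  have heq : ((nemAux f hf (p + q) - nemAux f hf p - (dnemAux Df hDf_cont p) q) x)
      = f x (w + v) - f x w - Df x w v := by
    simp only [ContinuousMap.sub_apply, nemAux, dnemAux, ContinuousMap.coe_mk,
      LinearMap.mkContinuous_apply, LinearMap.coe_mk, AddHom.coe_mk,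
      Prod.fst_add, Prod.snd_add, ContinuousMap.add_apply]
    have harg : p.1 + q.1 + (p.2 x + q.2 x) = (p.1 + p.2 x) + (q.1 + q.2 x) := by abel
    rw [hw, hv, harg]
  rw [heq]
  calc ‖f x (w + v) - f x w - Df x w v‖ ≤ (L * ‖v‖) * ‖v‖ := key
    _ ≤ (L * (2 * ‖q‖)) * (2 * ‖q‖) := by
        apply mul_le_mul (mul_le_mul_of_nonneg_left hvq hL0) hvq (norm_nonneg _) (by positivity)
    _ = 4 * L * ‖q‖ * ‖q‖ := by ring
    _ ≤ c * ‖q‖ := by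
        have h : ‖q‖ * (4 * L + 1) ≤ c := (le_div_iff₀ (by positivity)).1 hq2
        nlinarith [norm_nonneg q, mul_le_mul_of_nonneg_left h (norm_nonneg q)]

lemma dnemAux_continuous (Df : Ω → (Fin d → ℝ) → ((Fin d → ℝ) →L[ℝ] (Fin d → ℝ)))
    (hDf_cont : Continuous fun q : Ω × (Fin d → ℝ) => Df q.1 q.2)
    (hDf_lip : ∀ r : ℝ, 0 < r → ∃ L : ℝ, 0 ≤ L ∧ ∀ (x : Ω) (w w' : Fin d → ℝ),
      ‖w‖ ≤ r → ‖w'‖ ≤ r → ‖Df x w - Df x w'‖ ≤ L * ‖w - w'‖) :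
    Continuous (dnemAux Df hDf_cont) := by
  rw [continuous_iff_continuousAt]
  intro p₀
  obtain ⟨L, hL0, hL⟩ := hDf_lip (‖p₀.1‖ + ‖p₀.2‖ + 2) (by positivity)
  have hlip : LipschitzOnWith (Real.toNNReal (4 * L)) (dnemAux Df hDf_cont)
      (Metric.ball p₀ 1) := by
    refine LipschitzOnWith.of_dist_le' fun p hp p' hp' => ?_
    rw [Metric.mem_ball, dist_eq_norm] at hp hp'
    refine le_trans (le_of_eq (dist_eq_norm (dnemAux Df hDf_cont p) (dnemAux Df hDf_cont p'))) ?_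
    rw [dist_eq_norm]
    refine ContinuousLinearMap.opNorm_le_bound _ (by positivity) fun q => ?_
    rw [ContinuousLinearMap.sub_apply]
    refine (ContinuousMap.norm_le _ (by positivity)).2 fun x => ?_
    have hp1 : ‖p.1 - p₀.1‖ ≤ ‖p - p₀‖ := norm_fst_le (p - p₀)
    have hp1' : ‖p'.1 - p₀.1‖ ≤ ‖p' - p₀‖ := norm_fst_le (p' - p₀)
    have hp2x : ‖p.2 x - p₀.2 x‖ ≤ ‖p - p₀‖ := by
      simpa using ((p.2 - p₀.2).norm_coe_le_norm x).trans (norm_snd_le (p - p₀))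
    have hp2x' : ‖p'.2 x - p₀.2 x‖ ≤ ‖p' - p₀‖ := by
      simpa using ((p'.2 - p₀.2).norm_coe_le_norm x).trans (norm_snd_le (p' - p₀))
    have h02 : ‖p₀.2 x‖ ≤ ‖p₀.2‖ := p₀.2.norm_coe_le_norm x
    set w : Fin d → ℝ := p.1 + p.2 x with hw
    set w' : Fin d → ℝ := p'.1 + p'.2 x with hw'
    have hwr : ‖w‖ ≤ ‖p₀.1‖ + ‖p₀.2‖ + 2 := by
      calc ‖w‖ = ‖(p₀.1 + p₀.2 x) + ((p.1 - p₀.1) + (p.2 x - p₀.2 x))‖ := by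
            rw [show (p₀.1 + p₀.2 x) + ((p.1 - p₀.1) + (p.2 x - p₀.2 x)) = w from by
              rw [hw]; abel]
        _ ≤ ‖p₀.1 + p₀.2 x‖ + ‖(p.1 - p₀.1) + (p.2 x - p₀.2 x)‖ := norm_add_le _ _
        _ ≤ (‖p₀.1‖ + ‖p₀.2 x‖) + (‖p.1 - p₀.1‖ + ‖p.2 x - p₀.2 x‖) := by
            gcongr <;> exact norm_add_le _ _
        _ ≤ ‖p₀.1‖ + ‖p₀.2‖ + 2 := by linarith
    have hwr' : ‖w'‖ ≤ ‖p₀.1‖ + ‖p₀.2‖ + 2 := by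
      calc ‖w'‖ = ‖(p₀.1 + p₀.2 x) + ((p'.1 - p₀.1) + (p'.2 x - p₀.2 x))‖ := by
            rw [show (p₀.1 + p₀.2 x) + ((p'.1 - p₀.1) + (p'.2 x - p₀.2 x)) = w' from by
              rw [hw']; abel]
        _ ≤ ‖p₀.1 + p₀.2 x‖ + ‖(p'.1 - p₀.1) + (p'.2 x - p₀.2 x)‖ := norm_add_le _ _
        _ ≤ (‖p₀.1‖ + ‖p₀.2 x‖) + (‖p'.1 - p₀.1‖ + ‖p'.2 x - p₀.2 x‖) := by
            gcongr <;> exact norm_add_le _ _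
        _ ≤ ‖p₀.1‖ + ‖p₀.2‖ + 2 := by linarith
    have hww : ‖w - w'‖ ≤ 2 * ‖p - p'‖ := by
      have h1 : ‖p.1 - p'.1‖ ≤ ‖p - p'‖ := norm_fst_le (p - p')
      have h2 : ‖p.2 x - p'.2 x‖ ≤ ‖p - p'‖ := by
        simpa using ((p.2 - p'.2).norm_coe_le_norm x).trans (norm_snd_le (p - p'))
      calc ‖w - w'‖ = ‖(p.1 - p'.1) + (p.2 x - p'.2 x)‖ := by
            rw [show (p.1 - p'.1) + (p.2 x - p'.2 x) = w - w' from by rw [hw, hw']; abel]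
        _ ≤ ‖p.1 - p'.1‖ + ‖p.2 x - p'.2 x‖ := norm_add_le _ _
        _ ≤ 2 * ‖p - p'‖ := by linarith
    have hvq : ‖q.1 + q.2 x‖ ≤ 2 * ‖q‖ := by
      have := norm_fst_le q
      have h3 := (q.2.norm_coe_le_norm x).trans (norm_snd_le q)
      calc ‖q.1 + q.2 x‖ ≤ ‖q.1‖ + ‖q.2 x‖ := norm_add_le _ _
        _ ≤ 2 * ‖q‖ := by linarith
    have heq : ((dnemAux Df hDf_cont p q - dnemAux Df hDf_cont p' q) x)
        = (Df x w - Df x w') (q.1 + q.2 x) := by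
      simp only [dnemAux, ContinuousMap.sub_apply, LinearMap.mkContinuous_apply,
        LinearMap.coe_mk, AddHom.coe_mk, ContinuousMap.coe_mk,
        ContinuousLinearMap.sub_apply]
      rfl
    rw [heq]
    calc ‖(Df x w - Df x w') (q.1 + q.2 x)‖
        ≤ ‖Df x w - Df x w'‖ * ‖q.1 + q.2 x‖ := ContinuousLinearMap.le_opNorm _ _
      _ ≤ (L * ‖w - w'‖) * (2 * ‖q‖) := by
          apply mul_le_mul (hL x w w' hwr hwr') hvq (norm_nonneg _); positivity
      _ ≤ (L * (2 * ‖p - p'‖)) * (2 * ‖q‖) := by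
          apply mul_le_mul_of_nonneg_right
            (mul_le_mul_of_nonneg_left hww hL0) (by positivity)
      _ = 4 * L * ‖p - p'‖ * ‖q‖ := by ring
  exact hlip.continuousOn.continuousAt (Metric.ball_mem_nhds p₀ one_pos)

lemma nemAux_contDiff (f : Ω → (Fin d → ℝ) → (Fin d → ℝ))
    (hf : Continuous fun q : Ω × (Fin d → ℝ) => f q.1 q.2)
    (Df : Ω → (Fin d → ℝ) → ((Fin d → ℝ) →L[ℝ] (Fin d → ℝ)))
    (hDf : ∀ (x : Ω) (w : Fin d → ℝ), HasFDerivAt (f x) (Df x w) w)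
    (hDf_cont : Continuous fun q : Ω × (Fin d → ℝ) => Df q.1 q.2)
    (hDf_lip : ∀ r : ℝ, 0 < r → ∃ L : ℝ, 0 ≤ L ∧ ∀ (x : Ω) (w w' : Fin d → ℝ),
      ‖w‖ ≤ r → ‖w'‖ ≤ r → ‖Df x w - Df x w'‖ ≤ L * ‖w - w'‖) :
    ContDiff ℝ 1 (nemAux f hf) := by
  rw [contDiff_one_iff_fderiv]
  refine ⟨fun p => (nemAux_hasFDerivAt f hf Df hDf hDf_cont hDf_lip p).differentiableAt, ?_⟩
  have : fderiv ℝ (nemAux f hf) = dnemAux Df hDf_cont :=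
    funext fun p => (nemAux_hasFDerivAt f hf Df hDf hDf_cont hDf_lip p).fderiv
  rw [this]
  exact dnemAux_continuous Df hDf_cont hDf_lip

/-- Integration as a continuous linear map on `C(Ω, ℝ^d)`. -/
noncomputable def intCLM [MeasurableSpace Ω] [BorelSpace Ω] (μ : Measure Ω)
    [IsFiniteMeasure μ] : C(Ω, Fin d → ℝ) →L[ℝ] (Fin d → ℝ) := by
  have hint : ∀ Y : C(Ω, Fin d → ℝ), Integrable (fun x => Y x) μ := fun Y =>
    Y.continuous.integrable_of_hasCompactSupport (HasCompactSupport.of_compactSpace _)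
  refine LinearMap.mkContinuous
    { toFun := fun Y => ∫ x, Y x ∂μ
      map_add' := fun Y Z => by
        simp only [ContinuousMap.add_apply]
        exact integral_add (hint Y) (hint Z)
      map_smul' := fun c Y => by
        simp only [ContinuousMap.smul_apply, RingHom.id_apply]
        exact integral_smul c _ }
    (μ Set.univ).toReal (fun Y => ?_)
  simp only [LinearMap.coe_mk, AddHom.coe_mk]
  calc ‖∫ x, Y x ∂μ‖ ≤ ‖Y‖ * (μ Set.univ).toReal :=
        norm_integral_le_of_norm_le_const (Filter.Eventually.of_forall fun x =>
          Y.norm_coe_le_norm x)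
    _ = (μ Set.univ).toReal * ‖Y‖ := by ring

end Aux

theorem statement14 (Ω : Type*) [MetricSpace Ω] [CompactSpace Ω]
    [MeasurableSpace Ω] [BorelSpace Ω]
    (μ : Measure Ω) [IsFiniteMeasure μ] (hμ : 0 < μ Set.univ)
    (d : ℕ) (hd : 1 ≤ d)
    (f : Ω → (Fin d → ℝ) → (Fin d → ℝ))
    (hf_cont : Continuous fun q : Ω × (Fin d → ℝ) => f q.1 q.2)
    (Df : Ω → (Fin d → ℝ) → ((Fin d → ℝ) →L[ℝ] (Fin d → ℝ)))
    (hDf : ∀ (x : Ω) (w : Fin d → ℝ), HasFDerivAt (f x) (Df x w) w)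
    (hDf_cont : Continuous fun q : Ω × (Fin d → ℝ) => Df q.1 q.2)
    (hDf_lip : ∀ r : ℝ, 0 < r → ∃ L : ℝ, 0 ≤ L ∧ ∀ (x : Ω) (w w' : Fin d → ℝ),
      ‖w‖ ≤ r → ‖w'‖ ≤ r → ‖Df x w - Df x w'‖ ≤ L * ‖w - w'‖) :
    ContDiff ℝ 1 (fun p : (Fin d → ℝ) × C(Ω, Fin d → ℝ) =>
      (μ Set.univ).toReal⁻¹ • ∫ x, f x (p.1 + p.2 x) ∂μ) ∧
    (∀ Nem : (Fin d → ℝ) × C(Ω, Fin d → ℝ) → C(Ω, Fin d → ℝ),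
      (∀ (p : (Fin d → ℝ) × C(Ω, Fin d → ℝ)) (x : Ω), Nem p x = f x (p.1 + p.2 x)) →
      ContDiff ℝ 1 Nem) := by
  have hN : ContDiff ℝ 1 (nemAux f hf_cont) :=
    nemAux_contDiff f hf_cont Df hDf hDf_cont hDf_lip
  constructor
  · have heq : (fun p : (Fin d → ℝ) × C(Ω, Fin d → ℝ) =>
        (μ Set.univ).toReal⁻¹ • ∫ x, f x (p.1 + p.2 x) ∂μ)
        = fun p => (μ Set.univ).toReal⁻¹ • (intCLM μ) (nemAux f hf_cont p) := rfl
    rw [heq]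
    exact (((intCLM μ).contDiff).comp hN).const_smul _
  · intro Nem hNem
    have : Nem = nemAux f hf_cont := funext fun p => ContinuousMap.ext fun x => hNem p x
    rw [this]
    exact hN
end

section
/- Let C₁, m₁ and C₂, m₂ : Fin P → ℝ be positive functions (two species with linear consumptions), with R_i* = m_i/C_i and r_i* = E(m_i)/E(C_i) for i = 1, 2. Then r_2* < r_1* if and only if cov(C₂/E(C₂), R_2*) − cov(C₁/E(C₁), R_1*) < E(R_1*) − E(R_2*). -/
namespace BestCompetitor

/-- Spatial mean of a function on `Fin P`. -/
noncomputable def mean (P : ℕ) (g : Fin P → ℝ) : ℝ := (∑ j, g j) / P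

/-- Covariance of two functions on `Fin P`. -/
noncomputable def cov (P : ℕ) (g h : Fin P → ℝ) : ℝ :=
  mean P (fun j => g j * h j) - mean P g * mean P h

lemma mean_pos (P : ℕ) (hP : 1 ≤ P) (g : Fin P → ℝ) (hg : ∀ j, 0 < g j) :
    0 < mean P g := by
  have : 0 < (∑ j, g j) := Finset.sum_pos (fun j _ => hg j) (by
    simpa [Finset.univ_nonempty_iff, ← Fin.pos_iff_nonempty] using (show 0 < P by omega))
  exact div_pos this (by exact_mod_cast hP)

lemma mean_div_const (P : ℕ) (g : Fin P → ℝ) (c : ℝ) :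
    mean P (fun j => g j / c) = mean P g / c := by
  simp [mean, ← Finset.sum_div, div_div, mul_comm]

lemma cov_key (P : ℕ) (hP : 1 ≤ P) (C m : Fin P → ℝ)
    (hC : ∀ j, 0 < C j) :
    cov P (fun j => C j / mean P C) (fun j => m j / C j)
      = mean P m / mean P C - mean P (fun j => m j / C j) := by
  have hCm : mean P C ≠ 0 := (mean_pos P hP C hC).ne'
  have h1 : (fun j => C j / mean P C * (m j / C j)) = fun j => m j / mean P C := by
    funext j
    rw [div_mul_div_comm, mul_comm (mean P C), mul_div_mul_left _ _ (hC j).ne']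
  unfold cov
  rw [h1, mean_div_const, mean_div_const, div_self hCm, one_mul]

/-- **competitive covariance in heterogeneous environment.** For
two species with linear consumptions `Cᵢ` and mortalities `mᵢ`, with
`Rᵢ* = mᵢ/Cᵢ` and `rᵢ* = E(mᵢ)/E(Cᵢ)`, one has `r₂* < r₁*` if and only if
`cov(C₂/E(C₂), R₂*) − cov(C₁/E(C₁), R₁*) < E(R₁*) − E(R₂*)`. -/
theorem statement17 (P : ℕ) (hP : 1 ≤ P)
    (C₁ m₁ C₂ m₂ : Fin P → ℝ)
    (hC₁ : ∀ j, 0 < C₁ j) (hm₁ : ∀ j, 0 < m₁ j)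
    (hC₂ : ∀ j, 0 < C₂ j) (hm₂ : ∀ j, 0 < m₂ j) :
    mean P m₂ / mean P C₂ < mean P m₁ / mean P C₁ ↔
      cov P (fun j => C₂ j / mean P C₂) (fun j => m₂ j / C₂ j)
          - cov P (fun j => C₁ j / mean P C₁) (fun j => m₁ j / C₁ j)
        < mean P (fun j => m₁ j / C₁ j) - mean P (fun j => m₂ j / C₂ j) := by
  rw [cov_key P hP C₁ m₁ hC₁, cov_key P hP C₂ m₂ hC₂]
  constructor <;> intro h <;> linarith

end BestCompetitor
end

section
/- Let P ≥ 2 and let R_1*, R_2* : Fin P → ℝ be positive functions such that min_{j} R_2*(j) < max_{j} R_1*(j). Then there exist positive functions C₁, C₂ : Fin P → ℝ such that E(C₂·R_2*)/E(C₂) < E(C₁·R_1*)/E(C₁), i.e. r_2* < r_1* for the corresponding averaged break-even values. (This is the corrected form of the paper's Proposition 5.2: as printed there, the hypotheses 'R_1*(j) < R_2*(j) for all j' and 'max_j R_2*(j) < min_j R_1*(j)' are contradictory; the intended content is that a species that is the weaker local competitor at every site, i.e. R_1*(j) < R_2*(j) for all j, can nevertheless be the better competitor in average for suitable consumption weights,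 which follows from this statement.) -/
namespace BestCompetitor

lemma mean_div_mean (P : ℕ) (hP : (P : ℝ) ≠ 0) (f g : Fin P → ℝ) :
    mean P f / mean P g = (∑ j, f j) / (∑ j, g j) := by
  unfold mean
  rw [div_div_div_comm, div_self hP, div_one]

lemma sum_weight (P : ℕ) (j₀ : Fin P) (N : ℝ) (R : Fin P → ℝ) :
    ∑ j, (if j = j₀ then N else 1) * R j
      = N * R j₀ + ∑ j ∈ Finset.univ.erase j₀, R j := by
  rw [← Finset.add_sum_erase _ _ (Finset.mem_univ j₀)]
  simp only [if_pos rfl]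
  congr 1
  apply Finset.sum_congr rfl
  intro j hj
  rw [if_neg (Finset.mem_erase.mp hj).1, one_mul]

/-- **corrected Proposition 5.2.** Let `P ≥ 2` and let
`R₁*, R₂* : Fin P → ℝ` be positive with `min_j R₂*(j) < max_j R₁*(j)`. Then there
are positive consumption weights `C₁, C₂` such that the averaged break-even
values satisfy `r₂* = E(C₂·R₂*)/E(C₂) < E(C₁·R₁*)/E(C₁) = r₁*`. -/
theorem statement18 (P : ℕ) (hP : 2 ≤ P)
    (R₁ R₂ : Fin P → ℝ) (hR₁ : ∀ j, 0 < R₁ j) (hR₂ : ∀ j, 0 < R₂ j)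
    (hlt : (⨅ j, R₂ j) < ⨆ j, R₁ j) :
    ∃ C₁ C₂ : Fin P → ℝ, (∀ j, 0 < C₁ j) ∧ (∀ j, 0 < C₂ j) ∧
      mean P (fun j => C₂ j * R₂ j) / mean P C₂
        < mean P (fun j => C₁ j * R₁ j) / mean P C₁ := by
  have hPpos : 0 < P := by omega
  haveI : NeZero P := ⟨by omega⟩
  have hPne : (P : ℝ) ≠ 0 := by positivity
  -- maximizer of R₁ and minimizer of R₂
  obtain ⟨j₁, hj₁⟩ := Finite.exists_max R₁
  obtain ⟨j₂, hj₂⟩ := Finite.exists_min R₂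
  have hmax : (⨆ j, R₁ j) = R₁ j₁ :=
    le_antisymm (ciSup_le hj₁) (le_ciSup (Set.Finite.bddAbove (Set.finite_range R₁)) j₁)
  have hmin : (⨅ j, R₂ j) = R₂ j₂ :=
    le_antisymm (ciInf_le (Set.Finite.bddBelow (Set.finite_range R₂)) j₂) (le_ciInf hj₂)
  rw [hmin, hmax] at hlt
  set d : ℝ := R₁ j₁ - R₂ j₂ with hd
  have hdpos : 0 < d := by simp [hd]; linarith
  set S₁ : ℝ := ∑ j ∈ Finset.univ.erase j₁, R₁ j with hS₁
  set S₂ : ℝ := ∑ j ∈ Finset.univ.erase j₂, R₂ j with hS₂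
  set N : ℝ := max 1 ((S₂ - S₁) / d + 1) with hN
  have hN1 : 1 ≤ N := le_max_left _ _
  have hNpos : 0 < N := lt_of_lt_of_le one_pos hN1
  refine ⟨fun j => if j = j₁ then N else 1, fun j => if j = j₂ then N else 1,
    fun j => by dsimp only; split <;> [exact hNpos; exact one_pos],
    fun j => by dsimp only; split <;> [exact hNpos; exact one_pos], ?_⟩
  rw [mean_div_mean P hPne, mean_div_mean P hPne]
  have hsum1 : ∑ j : Fin P, (if j = j₁ then N else 1) = N + (P - 1 : ℝ) := by
    rw [← Finset.add_sum_erase _ _ (Finset.mem_univ j₁), if_pos rfl]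
    congr 1
    rw [Finset.sum_congr rfl (fun j hj => if_neg (Finset.mem_erase.mp hj).1),
      Finset.sum_const, Finset.card_erase_of_mem (Finset.mem_univ j₁)]
    simp [Finset.card_univ]
    push_cast [Nat.cast_sub (by omega : 1 ≤ P)]
    ring
  have hsum2 : ∑ j : Fin P, (if j = j₂ then N else 1) = N + (P - 1 : ℝ) := by
    rw [← Finset.add_sum_erase _ _ (Finset.mem_univ j₂), if_pos rfl]
    congr 1
    rw [Finset.sum_congr rfl (fun j hj => if_neg (Finset.mem_erase.mp hj).1),
      Finset.sum_const, Finset.card_erase_of_mem (Finset.mem_univ j₂)]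
    simp [Finset.card_univ]
    push_cast [Nat.cast_sub (by omega : 1 ≤ P)]
    ring
  rw [hsum1, hsum2, sum_weight P j₁ N R₁, sum_weight P j₂ N R₂, ← hS₁, ← hS₂]
  have hden : (0 : ℝ) < N + (P - 1 : ℝ) := by
    have : (2 : ℝ) ≤ (P : ℝ) := by exact_mod_cast hP
    linarith
  have hNd : (S₂ - S₁) / d + 1 ≤ N := le_max_right _ _
  have : S₂ - S₁ + d ≤ N * d := by
    have := mul_le_mul_of_nonneg_right hNd hdpos.le
    rwa [add_mul, one_mul, div_mul_cancel₀ _ hdpos.ne'] at this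
  have key : N * R₂ j₂ + S₂ < N * R₁ j₁ + S₁ := by nlinarith [hdpos]
  exact (div_lt_div_iff_of_pos_right hden).mpr key

end BestCompetitor
end
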